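/- Fix m ∈ ℕ, an integer k ≥ m, and an integer r ≥ 0. Let T be the number of coupons drawn until every one of the n types appears at least m times, and let S_{k,x} be the number of types appearing exactly k times among the first x coupons. Then for every integer M ≥ 1, P(S_{m−1,M−1} = 1, S_{m−1,M} = 0, S_{k,M−1} = r) = P(S_{m−1,M−1} = 1, S_{k,M−1} = r) / n, and consequently P(T = M, S_{k,M−1} = r) ≤ P(S_{m−1,M−1} = 1, S_{k,M−1} = r) / n. -/

import Mathlib

open MeasureTheory ProbabilityTheory Filter Real Topology

noncomputable section

/-- The number of coupon types that appear exactly `k` times among the first `x` draws. -/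
def couponCount {Ω : Type*} {n : ℕ} (X : ℕ → Ω → Fin n) (k x : ℕ) (ω : Ω) : ℕ :=
  (Finset.univ.filter fun c : Fin n =>
    ((Finset.range x).filter fun i => X i ω = c).card = k).card

/-- The number of coupons drawn until every type has appeared at least `m` times. -/
def collectTime {Ω : Type*} {n : ℕ} (X : ℕ → Ω → Fin n) (m : ℕ) (ω : Ω) : ℕ :=
  sInf {t | ∀ c : Fin n, m ≤ ((Finset.range t).filter fun i => X i ω = c).card}

/-- The draws `X i` are independent and each uniformly distributed on the `n` types. -/
def IIDUniform {Ω : Type*} [MeasurableSpace Ω] {n : ℕ} (X : ℕ → Ω → Fin n)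
    (μ : Measure Ω) : Prop :=
  (∀ i, Measurable (X i)) ∧ iIndepFun X μ ∧
    ∀ i (c : Fin n), μ {ω | X i ω = c} = 1 / n

/-- The Gumbel distribution `Gumbel(a, 1)`, i.e. the Borel measure on `ℝ` whose cumulative
distribution function is `x ↦ exp (-exp (-(x - a)))`. -/
def gumbelCDF (a : ℝ) : StieltjesFunction ℝ where
  toFun := fun x => Real.exp (-Real.exp (-(x - a)))
  mono' := fun x y h => by
    have h1 : Real.exp (-(y - a)) ≤ Real.exp (-(x - a)) := Real.exp_le_exp.2 (by linarith)
    exact Real.exp_le_exp.2 (by linarith)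
  right_continuous' := fun x => Continuous.continuousWithinAt (by continuity)

def gumbelMeasure (a : ℝ) : Measure ℝ := (gumbelCDF a).measure


namespace S19

variable {Ω : Type} {n : ℕ}

def cnt (X : ℕ → Ω → Fin n) (x : ℕ) (c : Fin n) (ω : Ω) : ℕ :=
  ((Finset.range x).filter fun i => X i ω = c).card

lemma couponCount_def (X : ℕ → Ω → Fin n) (j x : ℕ) (ω : Ω) :
    couponCount X j x ω = (Finset.univ.filter fun c : Fin n => cnt X x c ω = j).card := rfl

lemma cnt_succ (X : ℕ → Ω → Fin n) (x : ℕ) (c : Fin n) (ω : Ω) :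
    cnt X (x+1) c ω = cnt X x c ω + if X x ω = c then 1 else 0 := by
  unfold cnt
  rw [Finset.range_add_one, Finset.filter_insert]
  by_cases h : X x ω = c
  · rw [if_pos h, if_pos h, Finset.card_insert_of_notMem (by simp)]
  · rw [if_neg h, if_neg h, Nat.add_zero]

lemma eq_of_card_one {X : ℕ → Ω → Fin n} {j x : ℕ} {ω : Ω}
    (h : couponCount X j x ω = 1) {c d : Fin n}
    (hc : cnt X x c ω = j) (hd : cnt X x d ω = j) : c = d := by
  rw [couponCount_def, Finset.card_eq_one] at h
  obtain ⟨a, ha⟩ := h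
  have hc' : c ∈ Finset.univ.filter fun c => cnt X x c ω = j := by simp [hc]
  have hd' : d ∈ Finset.univ.filter fun c => cnt X x c ω = j := by simp [hd]
  rw [ha, Finset.mem_singleton] at hc' hd'
  rw [hc', hd']

lemma event_iff {X : ℕ → Ω → Fin n} {m k r N : ℕ} (hm : 1 ≤ m) (ω : Ω) :
    (couponCount X (m-1) N ω = 1 ∧ couponCount X (m-1) (N+1) ω = 0 ∧ couponCount X k N ω = r)
    ↔ ∃ c : Fin n, (couponCount X (m-1) N ω = 1 ∧ cnt X N c ω = m - 1
        ∧ couponCount X k N ω = r) ∧ X N ω = c := by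
  constructor
  · rintro ⟨h1, h2, h3⟩
    have h1' := h1
    rw [couponCount_def, Finset.card_eq_one] at h1'
    obtain ⟨c, hc⟩ := h1'
    have hcmem : cnt X N c ω = m - 1 := by
      have : c ∈ Finset.univ.filter fun d : Fin n => cnt X N d ω = m - 1 := by
        rw [hc]; exact Finset.mem_singleton_self c
      simpa using this
    refine ⟨c, ⟨h1, hcmem, h3⟩, ?_⟩
    by_contra hx
    have hcs : cnt X (N+1) c ω = m - 1 := by
      rw [cnt_succ, if_neg hx, Nat.add_zero]; exact hcmem
    have hmem : c ∈ Finset.univ.filter fun d : Fin n => cnt X (N+1) d ω = m - 1 := by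
      simp [hcs]
    rw [couponCount_def, Finset.card_eq_zero] at h2
    rw [h2] at hmem
    exact Finset.notMem_empty c hmem
  · rintro ⟨c, ⟨h1, hc, h3⟩, hXc⟩
    refine ⟨h1, ?_, h3⟩
    rw [couponCount_def, Finset.card_eq_zero, Finset.filter_eq_empty_iff]
    intro d _
    by_cases hdc : d = c
    · subst hdc
      rw [cnt_succ, if_pos hXc, hc]
      omega
    · rw [cnt_succ, if_neg (fun h => hdc (hXc ▸ h).symm ), Nat.add_zero]
      intro hd
      exact hdc (eq_of_card_one h1 hd hc)

lemma collect_lemma {X : ℕ → Ω → Fin n} {m N : ℕ} (hm : 1 ≤ m) {ω : Ω}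
    (h : collectTime X m ω = N + 1) :
    couponCount X (m-1) N ω = 1 ∧ couponCount X (m-1) (N+1) ω = 0 := by
  have hSdef : collectTime X m ω = sInf {t | ∀ c : Fin n, m ≤ cnt X t c ω} := rfl
  rw [hSdef] at h
  have hne : {t | ∀ c : Fin n, m ≤ cnt X t c ω}.Nonempty := by
    by_contra hemp
    rw [Set.not_nonempty_iff_eq_empty] at hemp
    rw [hemp, Nat.sInf_empty] at h
    omega
  have hmem : N + 1 ∈ {t | ∀ c : Fin n, m ≤ cnt X t c ω} := h ▸ Nat.sInf_mem hne
  have hnotmem : N ∉ {t | ∀ c : Fin n, m ≤ cnt X t c ω} :=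
    Nat.notMem_of_lt_sInf (by omega)
  obtain ⟨c, hclt⟩ : ∃ c : Fin n, cnt X N c ω < m := by
    by_contra hcon; push_neg at hcon; exact hnotmem hcon
  have hcsucc : m ≤ cnt X (N+1) c ω := hmem c
  have hstepc := cnt_succ X N c ω
  have hcm : cnt X N c ω = m - 1 := by
    by_cases hx : X N ω = c
    · rw [if_pos hx] at hstepc; omega
    · rw [if_neg hx] at hstepc; omega
  have huniq : ∀ d : Fin n, cnt X N d ω = m - 1 → d = c := by
    intro d hd
    by_contra hne'
    have hdsucc : m ≤ cnt X (N+1) d ω := hmem d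
    have hd2 := cnt_succ X N d ω
    have hXd : X N ω = d := by
      by_contra hx; rw [if_neg hx] at hd2; omega
    have hXc : X N ω = c := by
      by_contra hx; rw [if_neg hx] at hstepc; omega
    exact hne' (hXd.symm.trans hXc)
  constructor
  · rw [couponCount_def, Finset.card_eq_one]
    refine ⟨c, ?_⟩
    ext d
    simp only [Finset.mem_filter, Finset.mem_univ, true_and, Finset.mem_singleton]
    exact ⟨huniq d, fun h => h ▸ hcm⟩
  · rw [couponCount_def, Finset.card_eq_zero, Finset.filter_eq_empty_iff]
    intro d _
    have := hmem d
    omega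

lemma cnt_attach (X : ℕ → Ω → Fin n) (N : ℕ) (c : Fin n) (ω : Ω) :
    cnt X N c ω = ((Finset.range N).attach.filter fun i => X i.1 ω = c).card := by
  have h := congrArg Finset.card (Finset.filter_attach (fun x => X x ω = c) (Finset.range N))
  simp only [Finset.card_map, Finset.card_attach] at h
  simpa [cnt] using h.symm

end S19

/-- Fix `m ≥ 1`, `k ≥ m` and `r ≥ 0`. Let `T` be the number of draws until
each of the `n` types appears at least `m` times and `S_{k,x}` the number of types appearing
exactly `k` times among the first `x` draws. Then for every `M ≥ 1`,
`P(S_{m-1,M-1} = 1, S_{m-1,M} = 0, S_{k,M-1} = r) = P(S_{m-1,M-1} = 1, S_{k,M-1} = r)/n`,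
and consequently `P(T = M, S_{k,M-1} = r) ≤ P(S_{m-1,M-1} = 1, S_{k,M-1} = r)/n`. -/
theorem statement19
    (m : ℕ) (hm : 1 ≤ m) (k : ℕ) (hk : m ≤ k) (r : ℕ)
    (n : ℕ) (hn : 0 < n)
    (Ω : Type) [MeasurableSpace Ω]
    (μ : Measure Ω) (hprob : IsProbabilityMeasure μ)
    (X : ℕ → Ω → Fin n) (hX : IIDUniform X μ)
    (M : ℕ) (hM : 1 ≤ M) :
    μ {ω | couponCount X (m - 1) (M - 1) ω = 1
          ∧ couponCount X (m - 1) M ω = 0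
          ∧ couponCount X k (M - 1) ω = r}
      = μ {ω | couponCount X (m - 1) (M - 1) ω = 1 ∧ couponCount X k (M - 1) ω = r} / n
    ∧
    μ {ω | collectTime X m ω = M ∧ couponCount X k (M - 1) ω = r}
      ≤ μ {ω | couponCount X (m - 1) (M - 1) ω = 1 ∧ couponCount X k (M - 1) ω = r} / n := by
  classical
  obtain ⟨hmeas, hindep, hunif⟩ := hX
  obtain ⟨N, rfl⟩ : ∃ N, M = N + 1 := ⟨M - 1, (Nat.succ_pred_eq_of_pos hM).symm⟩
  simp only [Nat.add_sub_cancel]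
  set φ : Ω → (↥(Finset.range N) → Fin n) := fun ω i => X i ω with hφ
  set ψ : Ω → (↥({N} : Finset ℕ) → Fin n) := fun ω i => X i ω with hψ
  have hφm : Measurable φ := measurable_pi_lambda _ fun i => hmeas i
  have hψm : Measurable ψ := measurable_pi_lambda _ fun i => hmeas i
  have hIndep : IndepFun φ ψ μ :=
    hindep.indepFun_finset (Finset.range N) {N}
      (Finset.disjoint_singleton_right.mpr (by simp)) hmeas
  set A : Fin n → Set Ω := fun c =>
    {ω | couponCount X (m-1) N ω = 1 ∧ S19.cnt X N c ω = m - 1 ∧ couponCount X k N ω = r}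
    with hA
  set B : Fin n → Set (↥(Finset.range N) → Fin n) := fun c =>
    {f | (Finset.univ.filter fun d : Fin n =>
            ((Finset.range N).attach.filter fun i => f i = d).card = m-1).card = 1
       ∧ ((Finset.range N).attach.filter fun i => f i = c).card = m - 1
       ∧ (Finset.univ.filter fun d : Fin n =>
            ((Finset.range N).attach.filter fun i => f i = d).card = k).card = r} with hB
  have hAB : ∀ c, A c = φ ⁻¹' (B c) := by
    intro c
    ext ω
    simp only [hA, hB, hφ, Set.mem_setOf_eq, Set.mem_preimage,
      S19.couponCount_def, S19.cnt_attach]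
  have hBm : ∀ c, MeasurableSet (B c) := fun c => (Set.to_countable _).measurableSet
  have hAm : ∀ c, MeasurableSet (A c) := fun c => (hAB c) ▸ hφm (hBm c)
  set C : Fin n → Set (↥({N} : Finset ℕ) → Fin n) := fun c =>
    {g | g ⟨N, Finset.mem_singleton_self N⟩ = c} with hC
  have hCm : ∀ c, MeasurableSet (C c) := fun c => (Set.to_countable _).measurableSet
  have hψC : ∀ c, ψ ⁻¹' (C c) = {ω | X N ω = c} := fun c => rfl
  have hXNm : ∀ c : Fin n, MeasurableSet {ω | X N ω = c} := fun c =>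
    hmeas N (MeasurableSet.singleton c)
  have key : ∀ c, μ (A c ∩ {ω | X N ω = c}) = μ (A c) * (n : ENNReal)⁻¹ := by
    intro c
    rw [hAB c, ← hψC c,
      hIndep.measure_inter_preimage_eq_mul _ _ (hBm c) (hCm c), hψC c, hunif N c, one_div]
  have hset1 : {ω | couponCount X (m-1) N ω = 1 ∧ couponCount X (m-1) (N+1) ω = 0
      ∧ couponCount X k N ω = r} = ⋃ c, A c ∩ {ω | X N ω = c} := by
    ext ω
    simp only [Set.mem_setOf_eq, Set.mem_iUnion, Set.mem_inter_iff, hA]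
    exact S19.event_iff hm ω
  have hset2 : {ω | couponCount X (m-1) N ω = 1 ∧ couponCount X k N ω = r} = ⋃ c, A c := by
    ext ω
    simp only [Set.mem_setOf_eq, Set.mem_iUnion, hA]
    constructor
    · rintro ⟨h1, h3⟩
      have h1' := h1
      rw [S19.couponCount_def, Finset.card_eq_one] at h1'
      obtain ⟨c, hc⟩ := h1'
      have hone : c ∈ Finset.univ.filter fun d : Fin n => S19.cnt X N d ω = m - 1 := by
        rw [hc]; exact Finset.mem_singleton_self c
      exact ⟨c, h1, by simpa using hone, h3⟩
    · rintro ⟨c, h1, _, h3⟩; exact ⟨h1, h3⟩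
  have hd1 : Pairwise (Function.onFun Disjoint fun c => A c ∩ {ω | X N ω = c}) := by
    intro c d hcd
    refine Set.disjoint_left.mpr ?_
    rintro ω ⟨_, h1⟩ ⟨_, h2⟩
    exact hcd (h1.symm.trans h2)
  have hd2 : Pairwise (Function.onFun Disjoint A) := by
    intro c d hcd
    refine Set.disjoint_left.mpr ?_
    rintro ω ⟨hcc, h1, _⟩ ⟨_, h2, _⟩
    exact hcd (S19.eq_of_card_one hcc h1 h2)
  have main : μ {ω | couponCount X (m-1) N ω = 1 ∧ couponCount X (m-1) (N+1) ω = 0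
      ∧ couponCount X k N ω = r}
      = μ {ω | couponCount X (m-1) N ω = 1 ∧ couponCount X k N ω = r} / n := by
    rw [hset1, hset2, measure_iUnion hd1 (fun c => (hAm c).inter (hXNm c)),
        measure_iUnion hd2 hAm]
    simp_rw [key]
    rw [ENNReal.tsum_mul_right, div_eq_mul_inv]
  have hsub : {ω | collectTime X m ω = N + 1 ∧ couponCount X k N ω = r} ⊆
      {ω | couponCount X (m-1) N ω = 1 ∧ couponCount X (m-1) (N+1) ω = 0
        ∧ couponCount X k N ω = r} := by
    rintro ω ⟨hT, hr⟩
    obtain ⟨a, b⟩ := S19.collect_lemma hm hT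
    exact ⟨a, b, hr⟩
  exact ⟨main, main ▸ measure_mono hsub⟩
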